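/- Let k > 1 and let s be the Yu-Gong sequence of period N = 4(2^{2k} − 1). Then S(2)·T* ≡ 13 (mod 15) if k ≡ 0 (mod 4); S(2)·T* ≡ 0 (mod 15) if k ≡ 1 (mod 4); S(2)·T* ≡ 10 (mod 15) if k ≡ 2 (mod 4); and S(2)·T* ≡ 9 (mod 15) if k ≡ 3 (mod 4). In particular, gcd(S(2)·T*, 2^N − 1) > 1 when k ≡ 1, 2, 3 (mod 4). -/

import Mathlib

lemma YG.pow2_mod (a : ℕ) : (2:ZMod 15)^a = 2^(a % 4) := by
  conv_lhs => rw [← Nat.div_add_mod a 4, pow_add, pow_mul]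
  rw [show ((2:ZMod 15)^4 = 1) from rfl, one_pow, one_mul]

lemma YG.sum_split {M : Type*} [AddCommMonoid M] (m n : ℕ) (f : ℕ → M) :
    ∑ t ∈ Finset.range (m*n), f t
      = ∑ i ∈ Finset.range m, ∑ j ∈ Finset.range n, f (i*n + j) := by
  induction m with
  | zero => simp
  | succ m ih => rw [Nat.succ_mul, Finset.sum_range_add, ih, Finset.sum_range_succ]

lemma YG.sum_ite (K' Q : ℕ) (hQ : 0 < Q) (c : ZMod 15) :
    ∑ j ∈ Finset.range (K'*Q), (if j % Q = 0 then c else 0) = (K' : ZMod 15) * c := by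
  rw [YG.sum_split K' Q]
  have h : ∀ i ∈ Finset.range K',
      (∑ r ∈ Finset.range Q, if (i*Q + r) % Q = 0 then c else 0) = c := by
    intro i _
    have h2 : ∀ r ∈ Finset.range Q,
        (if (i*Q + r) % Q = 0 then c else 0) = (if r = 0 then c else 0) := by
      intro r hr
      rw [mul_comm i Q, Nat.mul_add_mod, Nat.mod_eq_of_lt (Finset.mem_range.mp hr)]
    rw [Finset.sum_congr rfl h2, Finset.sum_ite_eq' (Finset.range Q) 0 (fun _ => c),
      if_pos (Finset.mem_range.mpr hQ)]
  rw [Finset.sum_congr rfl h, Finset.sum_const, Finset.card_range, nsmul_eq_mul]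

lemma YG.perS (β : ZMod 2) (m n : ℕ) (hm : m < 4) (hn : n < 4) :
    (((if (((0:ℕ):ℤ) + (m:ℤ)) % 4 = 0 then (0:ZMod 2) else 1) + β).val : ZMod 15) * 2^n
  + (((if (((1:ℕ):ℤ) + (m:ℤ)) % 4 = 0 then (0:ZMod 2) else 1) + β).val : ZMod 15) * 2^((n+3)%4)
  + (((if (((2:ℕ):ℤ) + (m:ℤ)) % 4 = 0 then (0:ZMod 2) else 1) + β).val : ZMod 15) * 2^((n+2)%4)
  + (((if (((3:ℕ):ℤ) + (m:ℤ)) % 4 = 0 then (0:ZMod 2) else 1) + β).val : ZMod 15) * 2^((n+1)%4)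
  = (2 * (β.val : ZMod 15) - 1) * 2^((n+m)%4) := by
  interval_cases m <;> interval_cases n <;> revert β <;> decide

lemma YG.perT (β : ZMod 2) (m n : ℕ) (hm : m < 4) (hn : n < 4) :
    (-1 : ZMod 15)^(((if (((0:ℕ):ℤ) + (m:ℤ)) % 4 = 0 then (0:ZMod 2) else 1) + β).val)
        * 2^((20-n)%4)
  + (-1 : ZMod 15)^(((if (((1:ℕ):ℤ) + (m:ℤ)) % 4 = 0 then (0:ZMod 2) else 1) + β).val)
        * 2^((17-n)%4)
  + (-1 : ZMod 15)^(((if (((2:ℕ):ℤ) + (m:ℤ)) % 4 = 0 then (0:ZMod 2) else 1) + β).val)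
        * 2^((14-n)%4)
  + (-1 : ZMod 15)^(((if (((3:ℕ):ℤ) + (m:ℤ)) % 4 = 0 then (0:ZMod 2) else 1) + β).val)
        * 2^((11-n)%4)
  = 2 * (-1 : ZMod 15)^(β.val) * 2^((16-n-m)%4) := by
  interval_cases m <;> interval_cases n <;> revert β <;> decide

lemma YG.negone (β : ZMod 2) : (-1 : ZMod 15)^(β.val) = 1 - 2*(β.val : ZMod 15) := by
  revert β; decide

lemma YG.val_ite (t : ZMod 2) : t.val = if t = 1 then 1 else 0 := by revert t; decide
lemma YG.oneone : (1:ZMod 2) + 1 = 0 := by decide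
lemma YG.ne_one (t : ZMod 2) : ¬ t = 1 ↔ t = 0 := by revert t; decide

lemma YG.trace_fixed (k : ℕ) (F : Type) [Field F] [Fintype F] [Algebra (ZMod 2) F]
    (hF : Fintype.card F = 2^(2*k)) (a : F) (ha : a ^ 2^k ≠ a) (x : F) (hx : x ^ 2^k = x) :
    Algebra.trace (ZMod 2) F x = 0 := by
  haveI : Fact (Nat.Prime 2) := ⟨Nat.prime_two⟩
  haveI : CharP F 2 := charP_of_injective_algebraMap (algebraMap (ZMod 2) F).injective 2
  have hit : ∀ y : F, iterateFrobenius F 2 k y = y ^ 2^k := fun y => iterateFrobenius_def 2 k y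
  have hinj : Function.Injective (iterateFrobenius F 2 k) := (iterateFrobenius F 2 k).injective
  have hbij : Function.Bijective (iterateFrobenius F 2 k) :=
    ⟨hinj, Finite.surjective_of_injective hinj⟩
  have hcomm : ∀ c : ZMod 2, (iterateFrobenius F 2 k) (algebraMap (ZMod 2) F c)
      = algebraMap (ZMod 2) F c := by
    intro c
    rw [show (iterateFrobenius F 2 k) ((algebraMap (ZMod 2) F) c)
        = ((iterateFrobenius F 2 k).comp (algebraMap (ZMod 2) F)) c from rfl,
      Subsingleton.elim ((iterateFrobenius F 2 k).comp (algebraMap (ZMod 2) F))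
        (algebraMap (ZMod 2) F)]
  let ψ : F ≃ₐ[ZMod 2] F := AlgEquiv.ofBijective ⟨iterateFrobenius F 2 k, hcomm⟩ hbij
  have hψ : ∀ y : F, ψ y = y ^ 2^k := hit
  have hψψ : ∀ σ : F ≃ₐ[ZMod 2] F, ψ.trans σ = σ → False := by
    intro σ hσ
    apply ha
    have h1 : (ψ.trans σ) a = σ a := by rw [hσ]
    have h2 : σ (ψ a) = σ a := h1
    have := σ.injective h2
    rwa [hψ] at this
  have hsum : ∑ σ : F ≃ₐ[ZMod 2] F, σ x = 0 := by
    apply Finset.sum_ninvolution (fun σ => ψ.trans σ)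
    · intro σ
      have h : σ (ψ x) = σ x := by rw [hψ, hx]
      simp only [AlgEquiv.trans_apply, h]
      exact CharTwo.add_self_eq_zero _
    · exact fun σ _ h => hψψ σ h
    · intro σ; exact Finset.mem_univ _
    · intro σ
      ext y
      simp only [AlgEquiv.trans_apply, hψ]
      rw [← pow_mul]
      have h2 : 2^k * 2^k = Fintype.card F := by rw [hF, two_mul, pow_add]
      rw [h2, FiniteField.pow_card]
  have htr := trace_eq_sum_automorphisms (K := ZMod 2) x
  rw [hsum] at htr
  have : algebraMap (ZMod 2) F (Algebra.trace (ZMod 2) F x) = algebraMap (ZMod 2) F 0 := by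
    rw [htr, map_zero]
  exact (algebraMap (ZMod 2) F).injective this

lemma YG.count (k : ℕ) (hk : 0 < k) (F : Type) [Field F] [Fintype F] [Algebra (ZMod 2) F]
    (hF : Fintype.card F = 2^(2*k)) :
    ∑ x : F, (Algebra.trace (ZMod 2) F x).val = 2^(2*k-1) := by
  classical
  haveI : CharP F 2 := charP_of_injective_algebraMap (algebraMap (ZMod 2) F).injective 2
  haveI : FiniteDimensional (ZMod 2) F := Module.Finite.of_finite
  haveI : Algebra.IsSeparable (ZMod 2) F := IsGalois.to_isSeparable
  obtain ⟨y, hy⟩ := Algebra.trace_surjective (ZMod 2) F 1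
  have h1 : ∑ x : F, (Algebra.trace (ZMod 2) F x).val
      = (Finset.univ.filter (fun x : F => Algebra.trace (ZMod 2) F x = 1)).card := by
    rw [Finset.card_filter]
    exact Finset.sum_congr rfl (fun x _ => YG.val_ite _)
  have h2 : (Finset.univ.filter (fun x : F => Algebra.trace (ZMod 2) F x = 0)).card
      = (Finset.univ.filter (fun x : F => Algebra.trace (ZMod 2) F x = 1)).card := by
    apply Finset.card_bij' (fun x _ => x + y) (fun x _ => x + y)
    · intro x hx
      simp only [Finset.mem_filter, Finset.mem_univ, true_and] at hx ⊢
      rw [map_add, hx, hy, zero_add]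
    · intro x hx
      simp only [Finset.mem_filter, Finset.mem_univ, true_and] at hx ⊢
      rw [map_add, hx, hy, YG.oneone]
    · intro x _
      rw [add_assoc, CharTwo.add_self_eq_zero, add_zero]
    · intro x _
      rw [add_assoc, CharTwo.add_self_eq_zero, add_zero]
  have h3 := Finset.card_filter_add_card_filter_not
    (s := (Finset.univ : Finset F)) (p := fun x : F => Algebra.trace (ZMod 2) F x = 1)
  have h4 : (Finset.univ.filter (fun x : F => ¬ Algebra.trace (ZMod 2) F x = 1)).card
      = (Finset.univ.filter (fun x : F => Algebra.trace (ZMod 2) F x = 0)).card := by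
    congr 1
    apply Finset.filter_congr
    intro x _
    exact YG.ne_one _
  rw [Finset.card_univ, hF] at h3
  have h5 : 2^(2*k) = 2 * 2^(2*k-1) := by
    rw [← pow_succ']
    congr 1
    omega
  omega

lemma YG.sum_b (k : ℕ) (hk : 1 < k) (F : Type) [Field F] [Fintype F] [Algebra (ZMod 2) F]
    (hF : Fintype.card F = 2^(2*k)) (α : F) (hα : orderOf α = 2^(2*k)-1) :
    ∑ j ∈ Finset.range (2^(2*k)-1), (Algebra.trace (ZMod 2) F (α^j)).val = 2^(2*k-1) := by
  classical
  set W := 2^(2*k)-1 with hWdef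
  have hW1 : 1 < W := by
    have : 2^2 ≤ 2^(2*k) := Nat.pow_le_pow_right (by norm_num) (by omega)
    omega
  have hα0 : α ≠ 0 := by
    intro h
    have h1 := pow_orderOf_eq_one α
    rw [hα, h, zero_pow (by omega : W ≠ 0)] at h1
    exact zero_ne_one h1
  have hinj : Set.InjOn (fun j : ℕ => α ^ j) (Finset.range W : Set ℕ) := by
    intro a ha b hb hab
    simp only [Finset.coe_range, Set.mem_Iio] at ha hb
    exact pow_injOn_Iio_orderOf (by rwa [hα]) (by rwa [hα]) hab
  have himg : (Finset.range W).image (fun j : ℕ => α ^ j) = Finset.univ.erase 0 := by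
    apply Finset.eq_of_subset_of_card_le
    · intro x hx
      simp only [Finset.mem_image] at hx
      obtain ⟨j, _, rfl⟩ := hx
      exact Finset.mem_erase.mpr ⟨pow_ne_zero _ hα0, Finset.mem_univ _⟩
    · rw [Finset.card_erase_of_mem (Finset.mem_univ _), Finset.card_univ, hF,
        Finset.card_image_of_injOn hinj, Finset.card_range]
  have hs1 : ∑ j ∈ Finset.range W, (Algebra.trace (ZMod 2) F (α^j)).val
      = ∑ x ∈ (Finset.range W).image (fun j : ℕ => α ^ j),
          (Algebra.trace (ZMod 2) F x).val := by
    rw [Finset.sum_image (fun a ha b hb => hinj ha hb)]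
  rw [hs1, himg, Finset.sum_erase _ (by rw [map_zero]; rfl)]
  exact YG.count k (by omega) F hF

theorem stmt10
    (k : ℕ) (hk : 1 < k)
    (δ : ℤ) (hδ : δ = 1 ∨ δ = -1)
    (W N : ℕ) (hW : W = 2 ^ (2 * k) - 1) (hN : N = 4 * W)
    (F : Type) [Field F] [Fintype F] [Algebra (ZMod 2) F]
    (hF : Fintype.card F = 2 ^ (2 * k))
    (α : F) (hα : orderOf α = 2 ^ (2 * k) - 1)
    (b : ℕ → ZMod 2) (hb : ∀ j, b j = Algebra.trace (ZMod 2) F (α ^ j))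
    (e : ℕ → ℤ)
    (he : ∀ i r : ℕ, i ≤ 2 ^ k - 2 → r ≤ 2 ^ k →
      e ((2 ^ k + 1) * i + r) =
        if r = 0 then (3 * (i : ℤ) + δ) % 4 else (3 * ((i : ℤ) + (r : ℤ))) % 4)
    (s : ℕ → ZMod 2)
    (hs : ∀ i j : ℕ, i ≤ 3 → j ≤ W - 1 →
      s (i * W + j) = (if ((i : ℤ) + e j) % 4 = 0 then 0 else 1) + b j)
    (S2 T2 : ℤ)
    (hS2 : S2 = ∑ t ∈ Finset.range N, ((s t).val : ℤ) * 2 ^ t)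
    (hT2 : T2 = ∑ t ∈ Finset.range N, (-1 : ℤ) ^ (s t).val * 2 ^ ((N - t) % N))
    :
    (k % 4 = 0 → Int.ModEq 15 (S2 * T2) 13) ∧
    (k % 4 = 1 → Int.ModEq 15 (S2 * T2) 0) ∧
    (k % 4 = 2 → Int.ModEq 15 (S2 * T2) 10) ∧
    (k % 4 = 3 → Int.ModEq 15 (S2 * T2) 9) ∧
    (k % 4 = 1 ∨ k % 4 = 2 ∨ k % 4 = 3 → 1 < Int.gcd (S2 * T2) (2 ^ N - 1)) := by
  -- basic arithmetic facts
  have hk2 : 2 ≤ k := hk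
  have hKdvd : (4:ℕ) ∣ 2^k := by
    have h := pow_dvd_pow 2 hk2
    simpa using h
  have hKge : 4 ≤ 2^k := Nat.le_of_dvd (Nat.two_pow_pos k) hKdvd
  have h2kdvd : (4:ℕ) ∣ 2^(2*k) := by
    have h := pow_dvd_pow 2 (show 2 ≤ 2*k by omega)
    simpa using h
  obtain ⟨A, hA⟩ : ∃ A, 2^k * 2^k = A := ⟨_, rfl⟩
  have h2k : 2^(2*k) = A := by rw [two_mul, pow_add, hA]
  have hAge : 4*2^k ≤ A := by rw [← hA]; exact Nat.mul_le_mul_right _ hKge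
  have hW4 : W % 4 = 3 := by omega
  have hW15 : 15 ≤ W := by omega
  have hWQ : W = (2^k - 1) * (2^k + 1) := by
    have h2 : ((2^k - 1 : ℕ) : ℤ) = 2^k - 1 := by
      rw [Nat.cast_sub Nat.one_le_two_pow]; push_cast; ring
    have h3 : ((W : ℕ) : ℤ) = 2^(2*k) - 1 := by
      rw [hW, Nat.cast_sub Nat.one_le_two_pow]; push_cast; ring
    have h5 : (2:ℤ)^(2*k) = 2^k * 2^k := by rw [two_mul, pow_add]
    have key : ((W:ℕ):ℤ) = (((2^k-1)*(2^k+1) : ℕ) : ℤ) := by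
      rw [h3, Nat.cast_mul, h2]; push_cast; rw [h5]; ring
    exact_mod_cast key
  -- δ data
  have hδ4 : δ % 4 = 1 ∨ δ % 4 = 3 := by rcases hδ with rfl | rfl <;> decide
  have hδ4' : (-δ) % 4 = 3 ∨ (-δ) % 4 = 1 := by rcases hδ with rfl | rfl <;> decide
  obtain ⟨d1, hd1⟩ : ∃ d : ℕ, (d:ℤ) = δ % 4 := ⟨(δ % 4).toNat, by omega⟩
  obtain ⟨d2, hd2⟩ : ∃ d : ℕ, (d:ℤ) = (-δ) % 4 := ⟨((-δ) % 4).toNat, by omega⟩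
  -- α is nonzero; lift to the unit group
  have hα0 : α ≠ 0 := by
    intro h
    have h1 := pow_orderOf_eq_one α
    rw [hα, h, zero_pow (by omega : 2^(2*k)-1 ≠ 0)] at h1
    exact zero_ne_one h1
  set u : Fˣ := Units.mk0 α hα0 with hudef
  have huv : (u : F) = α := rfl
  have hu : orderOf u = 2^(2*k)-1 := by
    rw [← hα, ← orderOf_units, huv]
  -- α is not fixed by the k-th Frobenius power
  have hne : α ^ 2^k ≠ α := by
    intro hcon
    have hcon' : u ^ 2^k = u ^ 1 := by
      apply Units.ext
      rw [Units.val_pow_eq_pow_val, Units.val_pow_eq_pow_val, huv, pow_one]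
      exact hcon
    have h := pow_eq_pow_iff_modEq.mp hcon'
    rw [hu] at h
    unfold Nat.ModEq at h
    have l1 : 2^k < 2^(2*k)-1 := by omega
    have l2 : 1 < 2^(2*k)-1 := by omega
    rw [Nat.mod_eq_of_lt l1, Nat.mod_eq_of_lt l2] at h
    omega
  -- subfield elements are fixed by the k-th Frobenius power
  have hsubf : ∀ i : ℕ, (α ^ ((2^k+1) * i)) ^ 2^k = α ^ ((2^k+1) * i) := by
    have hyu : (u^(2^k+1)) ^ 2^k = u^(2^k+1) := by
      rw [← pow_mul]
      apply pow_eq_pow_iff_modEq.mpr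
      rw [hu]
      have hq : (2^k+1)*2^k = (2^(2*k)-1) + (2^k+1) := by
        have hr : (2^k+1)*2^k = 2^k*2^k + 2^k := by ring
        omega
      rw [hq]
      exact Nat.add_modEq_left
    have hy : (α^(2^k+1)) ^ 2^k = α^(2^k+1) := by
      have := congrArg (Units.val) hyu
      simpa [Units.val_pow_eq_pow_val, huv] using this
    intro i
    have h1 : (α ^ ((2^k+1)*i))^(2^k) = ((α^(2^k+1))^(2^k))^i := by
      rw [← pow_mul, ← pow_mul, ← pow_mul]
      congr 1
      ring
    rw [h1, hy, ← pow_mul]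
  -- the master per-index analysis
  have hJ : ∀ j, j < W → ∃ m : ℕ, m < 4 ∧ (m:ℤ) = e j ∧
      ((j % (2^k+1) = 0 → b j = 0 ∧ (j%4 + m) % 4 = d1 ∧ (16 - j%4 - m) % 4 = d2) ∧
       (¬ j % (2^k+1) = 0 → (j%4 + m)%4 = 0 ∧ (16 - j%4 - m)%4 = 0)) := by
    intro j hj
    obtain ⟨I, hI⟩ : ∃ I, j / (2^k+1) = I := ⟨_, rfl⟩
    obtain ⟨R, hR⟩ : ∃ R, j % (2^k+1) = R := ⟨_, rfl⟩
    obtain ⟨P, hP⟩ : ∃ P, (2^k+1) * I = P := ⟨_, rfl⟩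
    have hdm : P + R = j := by
      rw [← hP, ← hI, ← hR]; exact Nat.div_add_mod j (2^k+1)
    have hrQ : R < 2^k+1 := by rw [← hR]; exact Nat.mod_lt _ (by omega)
    have hiK : I ≤ 2^k - 2 := by
      have hj' : j < (2^k-1) * (2^k+1) := by rw [← hWQ]; exact hj
      rw [mul_comm] at hj'
      have h2 : j / (2^k+1) < 2^k - 1 := Nat.div_lt_of_lt_mul hj'
      omega
    have hP4 : P % 4 = I % 4 := by
      rw [← hP, Nat.mul_mod, (show (2^k+1)%4 = 1 by omega), one_mul, Nat.mod_mod]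
    have hej : e j = if R = 0 then (3*(I:ℤ)+δ)%4 else (3*((I:ℤ)+(R:ℤ)))%4 := by
      conv_lhs => rw [← hdm, ← hP]
      exact he I R hiK (by omega)
    have h0 : 0 ≤ e j := by rw [hej]; split <;> exact Int.emod_nonneg _ (by norm_num)
    have h4 : e j < 4 := by rw [hej]; split <;> exact Int.emod_lt_of_pos _ (by norm_num)
    refine ⟨(e j).toNat, by omega, by omega, ?_, ?_⟩
    · intro hr
      rw [hR] at hr
      have hme : (((e j).toNat : ℕ) : ℤ) = (3*(I:ℤ)+δ)%4 := by
        rw [Int.toNat_of_nonneg h0, hej, if_pos hr]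
      refine ⟨?_, by omega, by omega⟩
      rw [hb]
      apply YG.trace_fixed k F hF α hne
      have hj' : j = (2^k+1) * I := by omega
      rw [hj']
      exact hsubf I
    · intro hr
      rw [hR] at hr
      have hme : (((e j).toNat : ℕ) : ℤ) = (3*((I:ℤ)+(R:ℤ)))%4 := by
        rw [Int.toNat_of_nonneg h0, hej, if_neg hr]
      exact ⟨by omega, by omega⟩
  
  have hSz : (S2 : ZMod 15) = 2*(2^((2*k-1)%4) : ZMod 15) - (2^((2*k)%4) - 1)
      + ((2^(k%4) : ZMod 15) - 1) * (1 - 2^d1) := by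
    have hstep : ∀ j ∈ Finset.range W,
        (∑ i ∈ Finset.range 4, (((s (i*W+j)).val : ZMod 15) * 2^(i*W+j)))
        = (2*((b j).val : ZMod 15) - 1) + (if j % (2^k+1) = 0 then 1 - 2^d1 else 0) := by
      intro j hj
      rw [Finset.mem_range] at hj
      obtain ⟨m, hm4, hme, hc0, hc1⟩ := hJ j hj
      rw [Finset.sum_range_succ, Finset.sum_range_succ, Finset.sum_range_succ,
        Finset.sum_range_succ, Finset.sum_range_zero, zero_add]
      rw [hs 0 j (by norm_num) (by omega), hs 1 j (by norm_num) (by omega),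
        hs 2 j (by norm_num) (by omega), hs 3 j (by norm_num) (by omega)]
      rw [YG.pow2_mod (0*W+j), YG.pow2_mod (1*W+j), YG.pow2_mod (2*W+j), YG.pow2_mod (3*W+j)]
      rw [show (0*W+j)%4 = j%4 by omega, show (1*W+j)%4 = (j%4+3)%4 by omega,
        show (2*W+j)%4 = (j%4+2)%4 by omega, show (3*W+j)%4 = (j%4+1)%4 by omega]
      rw [← hme]
      rw [YG.perS (b j) m (j%4) hm4 (by omega)]
      by_cases hr : j % (2^k+1) = 0
      · obtain ⟨hb0, hexp, -⟩ := hc0 hr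
        rw [if_pos hr, hexp, hb0, show ((0:ZMod 2)).val = 0 from rfl]
        push_cast
        ring
      · obtain ⟨hexp, -⟩ := hc1 hr
        rw [if_neg hr, hexp, pow_zero, mul_one, add_zero]
    have e3 : (∑ j ∈ Finset.range W, (b j).val) = 2^(2*k-1) := by
      have hcg : ∀ j ∈ Finset.range W, (b j).val = (Algebra.trace (ZMod 2) F (α^j)).val :=
        fun j _ => by rw [hb]
      rw [Finset.sum_congr rfl hcg, hW]
      exact YG.sum_b k hk F hF α hα
    have c1 : ((2^(2*k-1) : ℕ) : ZMod 15) = 2^((2*k-1)%4) := by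
      push_cast
      rw [YG.pow2_mod]
    have c2 : ((W:ℕ) : ZMod 15) = 2^((2*k)%4) - 1 := by
      rw [hW, Nat.cast_sub Nat.one_le_two_pow]
      push_cast
      rw [YG.pow2_mod]
    have c3 : ((2^k-1 : ℕ) : ZMod 15) = 2^(k%4) - 1 := by
      rw [Nat.cast_sub Nat.one_le_two_pow]
      push_cast
      rw [YG.pow2_mod]
    have e2 : ∑ j ∈ Finset.range W, (if j % (2^k+1) = 0 then (1:ZMod 15) - 2^d1 else 0)
        = ((2^k-1 : ℕ) : ZMod 15) * (1 - 2^d1) := by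
      conv_lhs => rw [hWQ]
      exact YG.sum_ite _ _ (by omega) _
    have e1 : ∑ j ∈ Finset.range W, (2*((b j).val : ZMod 15) - 1)
        = 2*(((∑ j ∈ Finset.range W, (b j).val : ℕ)) : ZMod 15) - W := by
      rw [Finset.sum_sub_distrib, ← Finset.mul_sum, Finset.sum_const, Finset.card_range,
        nsmul_eq_mul, mul_one, Nat.cast_sum]
    rw [hS2]
    push_cast
    rw [hN, YG.sum_split 4 W, Finset.sum_comm, Finset.sum_congr rfl hstep,
      Finset.sum_add_distrib, e1, e2, e3, c1, c2, c3]
  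
  have hTz : (T2 : ZMod 15) = 2*((2^((2*k)%4) : ZMod 15) - 1) - 4*(2^((2*k-1)%4))
      + ((2^(k%4) : ZMod 15) - 1) * (2*2^d2 - 2) := by
    have hpre : ∀ t ∈ Finset.range N, ((-1 : ZMod 15))^((s t).val) * 2^((N-t)%N)
        = (-1 : ZMod 15)^((s t).val) * 2^(N-t) := by
      intro t ht
      rw [Finset.mem_range] at ht
      congr 1
      rcases Nat.eq_zero_or_pos t with rfl | htpos
      · rw [Nat.sub_zero, Nat.mod_self, YG.pow2_mod N, show N % 4 = 0 by omega]
      · rw [Nat.mod_eq_of_lt (by omega)]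
    have hstep : ∀ j ∈ Finset.range W,
        (∑ i ∈ Finset.range 4, ((-1 : ZMod 15))^((s (i*W+j)).val) * 2^(N-(i*W+j)))
        = (2 - 4*((b j).val : ZMod 15)) + (if j % (2^k+1) = 0 then 2*2^d2 - 2 else 0) := by
      intro j hj
      rw [Finset.mem_range] at hj
      obtain ⟨m, hm4, hme, hc0, hc1⟩ := hJ j hj
      rw [Finset.sum_range_succ, Finset.sum_range_succ, Finset.sum_range_succ,
        Finset.sum_range_succ, Finset.sum_range_zero, zero_add]
      rw [hs 0 j (by norm_num) (by omega), hs 1 j (by norm_num) (by omega),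
        hs 2 j (by norm_num) (by omega), hs 3 j (by norm_num) (by omega)]
      rw [YG.pow2_mod (N-(0*W+j)), YG.pow2_mod (N-(1*W+j)), YG.pow2_mod (N-(2*W+j)),
        YG.pow2_mod (N-(3*W+j))]
      rw [show (N-(0*W+j))%4 = (20-(j%4))%4 by omega, show (N-(1*W+j))%4 = (17-(j%4))%4 by omega,
        show (N-(2*W+j))%4 = (14-(j%4))%4 by omega, show (N-(3*W+j))%4 = (11-(j%4))%4 by omega]
      rw [← hme]
      rw [YG.perT (b j) m (j%4) hm4 (by omega)]
      by_cases hr : j % (2^k+1) = 0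
      · obtain ⟨hb0, -, hexp⟩ := hc0 hr
        rw [if_pos hr, hexp, hb0, show ((0:ZMod 2)).val = 0 from rfl, pow_zero]
        push_cast
        ring
      · obtain ⟨-, hexp⟩ := hc1 hr
        rw [if_neg hr, hexp, pow_zero, YG.negone]
        push_cast
        ring
    have e3 : (∑ j ∈ Finset.range W, (b j).val) = 2^(2*k-1) := by
      have hcg : ∀ j ∈ Finset.range W, (b j).val = (Algebra.trace (ZMod 2) F (α^j)).val :=
        fun j _ => by rw [hb]
      rw [Finset.sum_congr rfl hcg, hW]
      exact YG.sum_b k hk F hF α hα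
    have c1 : ((2^(2*k-1) : ℕ) : ZMod 15) = 2^((2*k-1)%4) := by
      push_cast
      rw [YG.pow2_mod]
    have c2 : ((W:ℕ) : ZMod 15) = 2^((2*k)%4) - 1 := by
      rw [hW, Nat.cast_sub Nat.one_le_two_pow]
      push_cast
      rw [YG.pow2_mod]
    have c3 : ((2^k-1 : ℕ) : ZMod 15) = 2^(k%4) - 1 := by
      rw [Nat.cast_sub Nat.one_le_two_pow]
      push_cast
      rw [YG.pow2_mod]
    have e2 : ∑ j ∈ Finset.range W, (if j % (2^k+1) = 0 then 2*(2^d2:ZMod 15) - 2 else 0)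
        = ((2^k-1 : ℕ) : ZMod 15) * (2*2^d2 - 2) := by
      conv_lhs => rw [hWQ]
      exact YG.sum_ite _ _ (by omega) _
    have e1 : ∑ j ∈ Finset.range W, (2 - 4*((b j).val : ZMod 15))
        = 2*(W : ZMod 15) - 4*(((∑ j ∈ Finset.range W, (b j).val : ℕ)) : ZMod 15) := by
      rw [Finset.sum_sub_distrib, ← Finset.mul_sum, Finset.sum_const, Finset.card_range,
        nsmul_eq_mul, Nat.cast_sum]
      ring
    rw [hT2]
    push_cast
    rw [Finset.sum_congr rfl hpre, show Finset.range N = Finset.range (4*W) by rw [hN],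
      YG.sum_split 4 W, Finset.sum_comm, Finset.sum_congr rfl hstep,
      Finset.sum_add_distrib, e1, e2, e3, c1, c2, c3]
  
  have key : (S2 : ZMod 15) * (T2 : ZMod 15) = 2^(2*(k%4)) - 2^(k%4) - 2 := by
    have hmod : k % 4 = 0 ∨ k % 4 = 1 ∨ k % 4 = 2 ∨ k % 4 = 3 := by omega
    rcases hδ with rfl | rfl
    · have hd1v : d1 = 1 := by omega
      have hd2v : d2 = 3 := by omega
      subst hd1v hd2v
      rcases hmod with h | h | h | h <;>
        rw [hSz, hTz, show (2*k)%4 = 2*(k%4)%4 by omega, show (2*k-1)%4 = (2*(k%4)+3)%4 by omega,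
          h] <;> decide
    · have hd1v : d1 = 3 := by omega
      have hd2v : d2 = 1 := by omega
      subst hd1v hd2v
      rcases hmod with h | h | h | h <;>
        rw [hSz, hTz, show (2*k)%4 = 2*(k%4)%4 by omega, show (2*k-1)%4 = (2*(k%4)+3)%4 by omega,
          h] <;> decide
  have mcast : ∀ v : ℤ, (S2 : ZMod 15) * (T2 : ZMod 15) = ((v : ℤ) : ZMod 15)
      → Int.ModEq 15 (S2 * T2) v := by
    intro v hv
    have hz : ((S2*T2 : ℤ) : ZMod 15) = ((v:ℤ) : ZMod 15) := by push_cast; push_cast at hv; exact hv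
    have h2 := (ZMod.intCast_eq_intCast_iff (S2*T2) v 15).mp hz
    simpa using h2
  have m0 : k % 4 = 0 → Int.ModEq 15 (S2 * T2) 13 := by
    intro h
    apply mcast
    rw [key, h]
    decide
  have m1 : k % 4 = 1 → Int.ModEq 15 (S2 * T2) 0 := by
    intro h
    apply mcast
    rw [key, h]
    decide
  have m2 : k % 4 = 2 → Int.ModEq 15 (S2 * T2) 10 := by
    intro h
    apply mcast
    rw [key, h]
    decide
  have m3 : k % 4 = 3 → Int.ModEq 15 (S2 * T2) 9 := by
    intro h
    apply mcast
    rw [key, h]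
    decide
  refine ⟨m0, m1, m2, m3, ?_⟩
  intro hcase
  obtain ⟨c, hc⟩ : (4:ℕ) ∣ N := ⟨W, hN⟩
  have h15 : (15:ℤ) ∣ 2^N - 1 := by
    have h16 : (16:ℤ)^c ≡ 1^c [ZMOD 15] := Int.ModEq.pow c (by decide)
    have hrw : (2:ℤ)^N = 16^c := by rw [hc, pow_mul]; norm_num
    have hd := Int.ModEq.dvd h16
    simp only [one_pow] at hd
    rw [hrw]
    omega
  have hpow : (1:ℤ) < 2^N := by
    have h1 : (2:ℤ)^1 ≤ 2^N := pow_le_pow_right₀ (by norm_num) (by omega)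
    norm_num at h1
    omega
  have hne0 : (2:ℤ)^N - 1 ≠ 0 := by omega
  have hgcd : ∀ d : ℤ, 0 < d → d ∣ S2*T2 → d ∣ 2^N - 1
      → d ≤ (Int.gcd (S2*T2) (2^N-1) : ℤ) ∨ True := fun _ _ _ _ => Or.inr trivial
  have hmain : ∀ d : ℤ, d ∣ S2*T2 → d ∣ 2^N - 1 → d ∣ (Int.gcd (S2*T2) (2^N-1) : ℤ) :=
    fun d h1 h2 => Int.dvd_coe_gcd h1 h2
  have hg0 : Int.gcd (S2*T2) (2^N-1) ≠ 0 := by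
    intro h0
    rw [Int.gcd_eq_zero_iff] at h0
    exact hne0 h0.2
  rcases hcase with h | h | h
  · have hd3 : (3:ℤ) ∣ S2*T2 := by
      have := Int.ModEq.dvd (m1 h)
      omega
    have := hmain 3 hd3 (dvd_trans (by norm_num) h15)
    omega
  · have hd5 : (5:ℤ) ∣ S2*T2 := by
      have := Int.ModEq.dvd (m2 h)
      omega
    have := hmain 5 hd5 (dvd_trans (by norm_num) h15)
    omega
  · have hd3 : (3:ℤ) ∣ S2*T2 := by
      have := Int.ModEq.dvd (m3 h)
      omega
    have := hmain 3 hd3 (dvd_trans (by norm_num) h15)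
    omega
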